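/- arXiv:2111.13306 — 2 statements merged into one kernel-verified Lean document; each statement's English description precedes it below -/
import Mathlib

section
/- Let (L₋₁ ⊕ L₀, {0, l₂, l₃}, {0, l₂', l₃'}) be a skeletal 2-term compatible L∞-algebra (i.e. one with l₁ = l₁' = 0). Set g = L₀ with brackets [x,y] := l₂(x,y) and [x,y]' := l₂'(x,y), and V = L₋₁ with ρ(x)h := l₂(x,h) and ρ'(x)h := l₂'(x,h). Then (g,[·,·],[·,·]') is a compatible Lie algebra, (V,ρ,ρ') is a representation of it, and the alternating trilinear maps l₃, l₃': g³ → V satisfy ∂l₃ = 0, ∂'l₃' = 0 and ∂l₃' + ∂'l₃ = 0, where ∂ and ∂' are the Chevalley–Eilenberg differentials of (g,[·,·],ρ) and (g,[·,·]',ρ') respectively; in particular the triple (l₃, l₃ + l₃', l₃') is a 3-cocycle of the compatible cochain complex. -/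
variable {K : Type*} [Field K] [CharZero K]
variable {A M : Type*} [AddCommGroup A] [Module K A] [AddCommGroup M] [Module K M]

/-- A 2-term L∞-algebra structure on `L₋₁ ⊕ L₀` with `L₋₁ = A`, `L₀ = M`:
`d = l₁ : A → M`, `b = l₂ : M × M → M` (skew-symmetric), `a = l₂ : M × A → A` (with the
convention `l₂(h,x) = −l₂(x,h) = −a x h`), and `t = l₃ : M³ → A` (alternating), subject to
the axioms (L1)–(L5). -/
structure IsL2 (d : A →ₗ[K] M) (b : M →ₗ[K] M →ₗ[K] M)
    (a : M →ₗ[K] A →ₗ[K] A) (t : M →ₗ[K] M →ₗ[K] M →ₗ[K] A) : Prop where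
  b_skew : ∀ x y : M, b x y = - b y x
  t_skew12 : ∀ x y z : M, t x y z = - t y x z
  t_skew23 : ∀ x y z : M, t x y z = - t x z y
  L1 : ∀ (x : M) (h : A), d (a x h) = b x (d h)
  L2 : ∀ h k : A, a (d h) k = - a (d k) h
  L3 : ∀ x y z : M, d (t x y z) = - b (b x y) z + b (b x z) y + b x (b y z)
  L4 : ∀ (h : A) (x y : M),
    t (d h) x y = - a (b x y) h - a y (a x h) + a x (a y h)
  L5 : ∀ w x y z : M,
    - a z (t w x y) - a x (t w y z) + a y (t w x z) + a w (t x y z)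
      = t (b w x) y z - t (b w y) x z + t (b w z) x y
        + t (b x y) w z - t (b x z) w y + t (b y z) w x

/-- The compatibility conditions (C1)–(C5) between two 2-term L∞-algebra structures
`(d,b,a,t)` and `(d',b',a',t')` on `L₋₁ ⊕ L₀` (with the convention
`l₂(h,x) = −a x h`, `l₂'(h,x) = −a' x h`). -/
structure IsCompat2 (d d' : A →ₗ[K] M) (b b' : M →ₗ[K] M →ₗ[K] M)
    (a a' : M →ₗ[K] A →ₗ[K] A) (t t' : M →ₗ[K] M →ₗ[K] M →ₗ[K] A) : Prop where
  C1 : ∀ (x : M) (h : A), d (a' x h) + d' (a x h) = b x (d' h) + b' x (d h)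
  C2 : ∀ h k : A, a (d' h) k + a' (d h) k = - a (d' k) h - a' (d k) h
  C3 : ∀ x y z : M, d (t' x y z) + d' (t x y z)
    = - b (b' x y) z - b' (b x y) z + b (b' x z) y + b' (b x z) y
      + b x (b' y z) + b' x (b y z)
  C4 : ∀ (h : A) (x y : M),
    t (d' h) x y + t' (d h) x y
      = - a (b' x y) h - a' (b x y) h - a y (a' x h) - a' y (a x h)
        + a x (a' y h) + a' x (a y h)
  C5 : ∀ w x y z : M,
    - a z (t' w x y) - a' z (t w x y) - a x (t' w y z) - a' x (t w y z)
      + a y (t' w x z) + a' y (t w x z) + a w (t' x y z) + a' w (t x y z)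
      = t (b' w x) y z + t' (b w x) y z - t (b' w y) x z - t' (b w y) x z
        + t (b' w z) x y + t' (b w z) x y + t (b' x y) w z + t' (b x y) w z
        - t (b' x z) w y - t' (b x z) w y + t (b' y z) w x + t' (b y z) w x

/-- A compatible Lie algebra structure: two skew-symmetric brackets, each satisfying the
Jacobi identity, satisfying the compatibility condition. -/
structure IsCompatLie {X : Type*} [AddCommGroup X] [Module K X]
    (B B' : X →ₗ[K] X →ₗ[K] X) : Prop where
  skew : ∀ x y : X, B x y = - B y x
  skew' : ∀ x y : X, B' x y = - B' y x
  jacobi : ∀ x y z : X, B (B x y) z + B (B y z) x + B (B z x) y = 0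
  jacobi' : ∀ x y z : X, B' (B' x y) z + B' (B' y z) x + B' (B' z x) y = 0
  compat : ∀ x y z : X, B (B' x y) z + B' (B x y) z
    = B (B' x z) y + B' (B x z) y + B x (B' y z) + B' x (B y z)

/-- The Chevalley–Eilenberg differential on `n`-cochains `(Fin n → X) → W`. -/
def ceDiff {X W : Type*} [AddCommGroup X] [Module K X] [AddCommGroup W] [Module K W]
    (br : X → X → X) (ρ : X → Module.End K W) :
    (n : ℕ) → ((Fin n → X) → W) → ((Fin (n + 1) → X) → W)
  | 0, f => fun x => ρ (x 0) (f Fin.elim0)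
  | n + 1, f => fun x =>
      (∑ i : Fin (n + 2), ((-1 : ℤ) ^ (i : ℕ)) • ρ (x i) (f (x ∘ i.succAbove))) +
      ∑ i : Fin (n + 2), ∑ j : Fin (n + 2),
        if h : (i : ℕ) < (j : ℕ) then
          ((-1 : ℤ) ^ ((i : ℕ) + (j : ℕ))) •
            f (Fin.cons (br (x i) (x j)) (fun k : Fin n =>
              x (j.succAbove ((Fin.castLT i
                (lt_of_lt_of_le h (Nat.lt_succ_iff.mp j.isLt))).succAbove k))))
        else 0

/-- The differential of the compatible cochain complex:
`∂_c(f₁,…,fₙ) = (∂f₁, ∂f₂ + ∂'f₁, …, ∂fᵢ + ∂'f_{i−1}, …, ∂'fₙ)`. -/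
def compDiff {X W : Type*} [AddCommGroup X] [Module K X] [AddCommGroup W] [Module K W]
    (br br' : X → X → X) (ρ ρ' : X → Module.End K W) (n : ℕ)
    (F : Fin n → ((Fin n → X) → W)) : Fin (n + 1) → ((Fin (n + 1) → X) → W) :=
  fun i =>
    (if h : (i : ℕ) < n then ceDiff br ρ n (F ⟨(i : ℕ), h⟩) else 0) +
    (if h : 0 < (i : ℕ) then
        ceDiff br' ρ' n (F ⟨(i : ℕ) - 1, by have := i.isLt; omega⟩) else 0)


section Aux
variable {K : Type*} [Field K] [CharZero K]
variable {A M : Type*} [AddCommGroup A] [Module K A] [AddCommGroup M] [Module K M]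

private lemma cons3_zero' {X : Type*} (a : X) (p : Fin 2 → X) : (Fin.cons a p : Fin 3 → X) 0 = a := rfl
private lemma cons3_one' {X : Type*} (a : X) (p : Fin 2 → X) : (Fin.cons a p : Fin 3 → X) 1 = p 0 := rfl
private lemma cons3_two' {X : Type*} (a : X) (p : Fin 2 → X) : (Fin.cons a p : Fin 3 → X) 2 = p 1 := rfl
private lemma clt0' (h : ((0:Fin 4):ℕ) < 3) : Fin.castLT (0:Fin 4) h = (0 : Fin 3) := rfl
private lemma clt1' (h : ((1:Fin 4):ℕ) < 3) : Fin.castLT (1:Fin 4) h = (1 : Fin 3) := rfl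
private lemma clt2' (h : ((2:Fin 4):ℕ) < 3) : Fin.castLT (2:Fin 4) h = (2 : Fin 3) := rfl
private lemma sa400' : (0:Fin 4).succAbove 0 = 1 := rfl
private lemma sa401' : (0:Fin 4).succAbove 1 = 2 := rfl
private lemma sa402' : (0:Fin 4).succAbove 2 = 3 := rfl
private lemma sa410' : (1:Fin 4).succAbove 0 = 0 := rfl
private lemma sa411' : (1:Fin 4).succAbove 1 = 2 := rfl
private lemma sa412' : (1:Fin 4).succAbove 2 = 3 := rfl
private lemma sa420' : (2:Fin 4).succAbove 0 = 0 := rfl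
private lemma sa421' : (2:Fin 4).succAbove 1 = 1 := rfl
private lemma sa422' : (2:Fin 4).succAbove 2 = 3 := rfl
private lemma sa430' : (3:Fin 4).succAbove 0 = 0 := rfl
private lemma sa431' : (3:Fin 4).succAbove 1 = 1 := rfl
private lemma sa432' : (3:Fin 4).succAbove 2 = 2 := rfl
private lemma sa300' : (0:Fin 3).succAbove 0 = 1 := rfl
private lemma sa301' : (0:Fin 3).succAbove 1 = 2 := rfl
private lemma sa310' : (1:Fin 3).succAbove 0 = 0 := rfl
private lemma sa311' : (1:Fin 3).succAbove 1 = 2 := rfl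
private lemma sa320' : (2:Fin 3).succAbove 0 = 0 := rfl
private lemma sa321' : (2:Fin 3).succAbove 1 = 1 := rfl
private lemma v40' : ((0:Fin 4):ℕ) = 0 := rfl
private lemma v41' : ((1:Fin 4):ℕ) = 1 := rfl
private lemma v42' : ((2:Fin 4):ℕ) = 2 := rfl
private lemma v43' : ((3:Fin 4):ℕ) = 3 := rfl

private lemma ce3 (br : M → M → M) (ρ : M → Module.End K A) (f : M → M → M → A)
    (F : (Fin 3 → M) → A) (hF : F = fun v => f (v 0) (v 1) (v 2)) (x : Fin 4 → M) :
    ceDiff (K := K) br ρ 3 F x =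
      ρ (x 0) (f (x 1) (x 2) (x 3)) - ρ (x 1) (f (x 0) (x 2) (x 3))
      + ρ (x 2) (f (x 0) (x 1) (x 3)) - ρ (x 3) (f (x 0) (x 1) (x 2))
      - f (br (x 0) (x 1)) (x 2) (x 3) + f (br (x 0) (x 2)) (x 1) (x 3)
      - f (br (x 0) (x 3)) (x 1) (x 2) - f (br (x 1) (x 2)) (x 0) (x 3)
      + f (br (x 1) (x 3)) (x 0) (x 2) - f (br (x 2) (x 3)) (x 0) (x 1) := by
  subst hF
  simp only [ceDiff]
  rw [Fin.sum_univ_four, Fin.sum_univ_four, Fin.sum_univ_four, Fin.sum_univ_four,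
    Fin.sum_univ_four, Fin.sum_univ_four]
  simp only [v40', v41', v42', v43', Function.comp_apply, clt0', clt1', clt2',
    cons3_zero', cons3_one', cons3_two', sa400', sa401', sa402', sa410', sa411', sa412',
    sa420', sa421', sa422', sa430', sa431', sa432', sa300', sa301', sa310', sa311',
    sa320', sa321']
  norm_num
  abel

end Aux

set_option maxHeartbeats 1000000 in
/-- a skeletal 2-term compatible L∞-algebra gives a compatible Lie algebra
`(M, b, b')`, a representation `(A, a, a')` of it, and the alternating trilinear maps
`t, t'` satisfy `∂t = 0`, `∂'t' = 0` and `∂t' + ∂'t = 0`; in particular the triple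
`(t, t + t', t')` is a 3-cocycle of the compatible cochain complex. -/
theorem stmt_14 (b b' : M →ₗ[K] M →ₗ[K] M) (a a' : M →ₗ[K] A →ₗ[K] A)
    (t t' : M →ₗ[K] M →ₗ[K] M →ₗ[K] A)
    (hL : IsL2 (0 : A →ₗ[K] M) b a t) (hL' : IsL2 (0 : A →ₗ[K] M) b' a' t')
    (hC : IsCompat2 (0 : A →ₗ[K] M) (0 : A →ₗ[K] M) b b' a a' t t') :
    IsCompatLie b b'
    ∧ (∀ x y : M, a (b x y) = a x ∘ₗ a y - a y ∘ₗ a x)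
    ∧ (∀ x y : M, a' (b' x y) = a' x ∘ₗ a' y - a' y ∘ₗ a' x)
    ∧ (∀ x y : M, a (b' x y) + a' (b x y)
        = a x ∘ₗ a' y - a' y ∘ₗ a x + a' x ∘ₗ a y - a y ∘ₗ a' x)
    ∧ (∀ x : Fin 4 → M,
        ceDiff (fun u v => b u v) (fun u => a u) 3
          (fun v : Fin 3 → M => t (v 0) (v 1) (v 2)) x = 0)
    ∧ (∀ x : Fin 4 → M,
        ceDiff (fun u v => b' u v) (fun u => a' u) 3
          (fun v : Fin 3 → M => t' (v 0) (v 1) (v 2)) x = 0)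
    ∧ (∀ x : Fin 4 → M,
        ceDiff (fun u v => b u v) (fun u => a u) 3
          (fun v : Fin 3 → M => t' (v 0) (v 1) (v 2)) x
        + ceDiff (fun u v => b' u v) (fun u => a' u) 3
          (fun v : Fin 3 → M => t (v 0) (v 1) (v 2)) x = 0)
    ∧ (∀ (i : Fin 4) (x : Fin 4 → M),
        compDiff (fun u v => b u v) (fun u v => b' u v) (fun u => a u) (fun u => a' u) 3
          (fun j => if (j : ℕ) = 0 then (fun v : Fin 3 → M => t (v 0) (v 1) (v 2))
            else if (j : ℕ) = 2 then (fun v : Fin 3 → M => t' (v 0) (v 1) (v 2))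
            else (fun v : Fin 3 → M => t (v 0) (v 1) (v 2) + t' (v 0) (v 1) (v 2)))
          i x = 0) := by
  obtain ⟨hb, ht12, ht23, _, _, hL3, hL4, hL5⟩ := hL
  obtain ⟨hb', ht12', ht23', _, _, hL3', hL4', hL5'⟩ := hL'
  obtain ⟨_, _, hC3, hC4, hC5⟩ := hC
  simp only [LinearMap.zero_apply, LinearMap.map_zero, map_zero, zero_add, add_zero]
    at hL3 hL4 hL5 hL3' hL4' hL5' hC3 hC4 hC5
  have jac : ∀ (c : M →ₗ[K] M →ₗ[K] M), (∀ x y : M, c x y = - c y x) →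
      (∀ x y z : M, (0:M) = - c (c x y) z + c (c x z) y + c x (c y z)) →
      ∀ x y z : M, c (c x y) z + c (c y z) x + c (c z x) y = 0 := by
    intro c h h3 x y z
    have e1 : c (c y z) x = - c x (c y z) := h _ _
    have e2 : c (c z x) y = - c (c x z) y := by rw [h z x]; simp
    linear_combination (norm := module) e1 + e2 + h3 x y z
  have dt : ∀ x : Fin 4 → M,
      ceDiff (K := K) (fun u v => b u v) (fun u => a u) 3
        (fun v : Fin 3 → M => t (v 0) (v 1) (v 2)) x = 0 := by
    intro x
    rw [ce3 (fun u v => b u v) (fun u => a u) (fun u v w => t u v w)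
      (fun v : Fin 3 → M => t (v 0) (v 1) (v 2)) rfl x]
    linear_combination (norm := module) hL5 (x 0) (x 1) (x 2) (x 3)
  have dt' : ∀ x : Fin 4 → M,
      ceDiff (K := K) (fun u v => b' u v) (fun u => a' u) 3
        (fun v : Fin 3 → M => t' (v 0) (v 1) (v 2)) x = 0 := by
    intro x
    rw [ce3 (fun u v => b' u v) (fun u => a' u) (fun u v w => t' u v w)
      (fun v : Fin 3 → M => t' (v 0) (v 1) (v 2)) rfl x]
    linear_combination (norm := module) hL5' (x 0) (x 1) (x 2) (x 3)
  have dmix : ∀ x : Fin 4 → M,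
      ceDiff (K := K) (fun u v => b u v) (fun u => a u) 3
        (fun v : Fin 3 → M => t' (v 0) (v 1) (v 2)) x
      + ceDiff (K := K) (fun u v => b' u v) (fun u => a' u) 3
        (fun v : Fin 3 → M => t (v 0) (v 1) (v 2)) x = 0 := by
    intro x
    rw [ce3 (fun u v => b u v) (fun u => a u) (fun u v w => t' u v w)
      (fun v : Fin 3 → M => t' (v 0) (v 1) (v 2)) rfl x,
      ce3 (fun u v => b' u v) (fun u => a' u) (fun u v w => t u v w)
      (fun v : Fin 3 → M => t (v 0) (v 1) (v 2)) rfl x]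
    linear_combination (norm := module) hC5 (x 0) (x 1) (x 2) (x 3)
  refine ⟨⟨hb, hb', jac b hb hL3, jac b' hb' hL3', ?_⟩, ?_, ?_, ?_, dt, dt', dmix, ?_⟩
  · intro x y z
    linear_combination (norm := module) hC3 x y z
  · intro x y
    ext h
    simp only [LinearMap.sub_apply, LinearMap.comp_apply]
    linear_combination (norm := module) hL4 h x y
  · intro x y
    ext h
    simp only [LinearMap.sub_apply, LinearMap.comp_apply]
    linear_combination (norm := module) hL4' h x y
  · intro x y
    ext h
    simp only [LinearMap.add_apply, LinearMap.sub_apply, LinearMap.comp_apply]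
    linear_combination (norm := module) hC4 h x y
  · intro i x
    fin_cases i <;>
      simp only [compDiff, Fin.isValue, Fin.val_zero, Fin.val_one, Fin.val_two,
        show ((3 : Fin 4) : ℕ) = 3 from rfl] <;>
      norm_num
    · exact dt x
    · have h1 := ce3 (K := K) (fun u v => b u v) (fun u => a u)
        (fun u v w => t u v w + t' u v w)
        (fun v : Fin 3 → M => t (v 0) (v 1) (v 2) + t' (v 0) (v 1) (v 2)) rfl x
      have h2 := ce3 (K := K) (fun u v => b' u v) (fun u => a' u) (fun u v w => t u v w)
        (fun v : Fin 3 → M => t (v 0) (v 1) (v 2)) rfl x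
      rw [h1, h2]
      simp only [map_add]
      linear_combination (norm := module) hL5 (x 0) (x 1) (x 2) (x 3)
        + hC5 (x 0) (x 1) (x 2) (x 3)
    · have h1 := ce3 (K := K) (fun u v => b u v) (fun u => a u) (fun u v w => t' u v w)
        (fun v : Fin 3 → M => t' (v 0) (v 1) (v 2)) rfl x
      have h2 := ce3 (K := K) (fun u v => b' u v) (fun u => a' u)
        (fun u v w => t u v w + t' u v w)
        (fun v : Fin 3 → M => t (v 0) (v 1) (v 2) + t' (v 0) (v 1) (v 2)) rfl x
      rw [h1, h2]
      simp only [map_add]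
      linear_combination (norm := module) hC5 (x 0) (x 1) (x 2) (x 3)
        + hL5' (x 0) (x 1) (x 2) (x 3)
    · exact dt' x
end

section
/- Let (g,[·,·],[·,·]') be a compatible Lie algebra, (V,ρ,ρ') a representation of it, and θ, θ': g³ → V alternating trilinear maps satisfying ∂θ = 0, ∂'θ' = 0 and ∂θ' + ∂'θ = 0, where ∂ and ∂' are the Chevalley–Eilenberg differentials of (g,[·,·],ρ) and (g,[·,·]',ρ') respectively. Put L₋₁ = V and L₀ = g, and define l₁ = l₁' = 0, l₂(x,y) = [x,y], l₂(x,h) = −l₂(h,x) = ρ(x)h, l₃ = θ, l₂'(x,y) = [x,y]', l₂'(x,h) = −l₂'(h,x) = ρ'(x)h, l₃' = θ'. Then (L₋₁ ⊕ L₀, {0, l₂, l₃}, {0, l₂', l₃'}) is a skeletal 2-term compatible L∞-algebra. -/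
set_option maxRecDepth 8000


variable {K : Type*} [Field K] [CharZero K]
variable {A M : Type*} [AddCommGroup A] [Module K A] [AddCommGroup M] [Module K M]

theorem ceDiff3_apply {X W : Type*} [AddCommGroup X] [Module K X] [AddCommGroup W]
    [Module K W] (br : X → X → X) (ρ : X → Module.End K W) (θ : X → X → X → W)
    (w x y z : X) :
    ceDiff (K := K) br ρ 3 (fun v : Fin 3 → X => θ (v 0) (v 1) (v 2)) ![w,x,y,z]
      = ρ w (θ x y z) - ρ x (θ w y z) + ρ y (θ w x z) - ρ z (θ w x y)
        - θ (br w x) y z + θ (br w y) x z - θ (br w z) x y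
        - θ (br x y) w z + θ (br x z) w y - θ (br y z) w x := by
  have consA : ∀ (c : X) (g : Fin 2 → X), Fin.cons (α := fun _ => X) c g 2 = g 1 := by
    intro c g; rw [show (2 : Fin 3) = Fin.succ 1 from rfl, Fin.cons_succ]
  simp only [ceDiff, Fin.sum_univ_succ, Fin.sum_univ_zero]
  norm_num [Fin.succAbove, Fin.castLT, Fin.lt_def, Fin.cons_zero, Fin.cons_succ]
  norm_num [consA, show Fin.castSucc (2 : Fin 3) = (2 : Fin 4) from rfl, Fin.lt_def]
  abel

/-- from a compatible Lie algebra `(M, b, b')`, a representation `(A, a, a')`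
and alternating trilinear maps `θ, θ' : M³ → A` with `∂θ = 0`, `∂'θ' = 0` and
`∂θ' + ∂'θ = 0`, one obtains a skeletal 2-term compatible L∞-algebra
`(A ⊕ M, {0, b/a, θ}, {0, b'/a', θ'})`. -/
theorem stmt_15 (b b' : M →ₗ[K] M →ₗ[K] M) (a a' : M →ₗ[K] A →ₗ[K] A)
    (θ θ' : M →ₗ[K] M →ₗ[K] M →ₗ[K] A)
    (hCL : IsCompatLie b b')
    (hrep : ∀ x y : M, a (b x y) = a x ∘ₗ a y - a y ∘ₗ a x)
    (hrep' : ∀ x y : M, a' (b' x y) = a' x ∘ₗ a' y - a' y ∘ₗ a' x)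
    (hrepmix : ∀ x y : M, a (b' x y) + a' (b x y)
      = a x ∘ₗ a' y - a' y ∘ₗ a x + a' x ∘ₗ a y - a y ∘ₗ a' x)
    (hθ12 : ∀ x y z : M, θ x y z = - θ y x z)
    (hθ23 : ∀ x y z : M, θ x y z = - θ x z y)
    (hθ'12 : ∀ x y z : M, θ' x y z = - θ' y x z)
    (hθ'23 : ∀ x y z : M, θ' x y z = - θ' x z y)
    (hcocy : ∀ x : Fin 4 → M,
      ceDiff (fun u v => b u v) (fun u => a u) 3
        (fun v : Fin 3 → M => θ (v 0) (v 1) (v 2)) x = 0)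
    (hcocy' : ∀ x : Fin 4 → M,
      ceDiff (fun u v => b' u v) (fun u => a' u) 3
        (fun v : Fin 3 → M => θ' (v 0) (v 1) (v 2)) x = 0)
    (hcocymix : ∀ x : Fin 4 → M,
      ceDiff (fun u v => b u v) (fun u => a u) 3
        (fun v : Fin 3 → M => θ' (v 0) (v 1) (v 2)) x
      + ceDiff (fun u v => b' u v) (fun u => a' u) 3
        (fun v : Fin 3 → M => θ (v 0) (v 1) (v 2)) x = 0) :
    IsL2 (0 : A →ₗ[K] M) b a θ ∧ IsL2 (0 : A →ₗ[K] M) b' a' θ'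
      ∧ IsCompat2 (0 : A →ₗ[K] M) (0 : A →ₗ[K] M) b b' a a' θ θ' := by
  have L3 : ∀ (B : M →ₗ[K] M →ₗ[K] M), (∀ x y : M, B x y = - B y x) →
      (∀ x y z : M, B (B x y) z + B (B y z) x + B (B z x) y = 0) →
      ∀ x y z : M, (0 : M) = - B (B x y) z + B (B x z) y + B x (B y z) := by
    intro B hs hj x y z
    have j := hj x y z
    rw [hs x z, hs x (B y z)]
    simp only [map_neg, LinearMap.neg_apply]
    rw [← sub_eq_zero]
    conv_rhs => rw [← j]
    abel
  have L4 : ∀ (α : M →ₗ[K] A →ₗ[K] A) (B : M →ₗ[K] M →ₗ[K] M),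
      (∀ x y : M, α (B x y) = α x ∘ₗ α y - α y ∘ₗ α x) →
      ∀ (h : A) (x y : M), (0 : A) = - α (B x y) h - α y (α x h) + α x (α y h) := by
    intro α B hr h x y
    have hx := congrArg (fun f : A →ₗ[K] A => f h) (hr x y)
    simp only [LinearMap.sub_apply, LinearMap.comp_apply] at hx
    have hz : α (B x y) h - (α x (α y h) - α y (α x h)) = 0 := sub_eq_zero.mpr hx
    rw [← sub_eq_zero]
    conv_rhs => rw [← hz]
    abel
  refine ⟨⟨hCL.skew, hθ12, hθ23, ?_, ?_, ?_, ?_, ?_⟩,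
          ⟨hCL.skew', hθ'12, hθ'23, ?_, ?_, ?_, ?_, ?_⟩,
          ⟨?_, ?_, ?_, ?_, ?_⟩⟩
  · intro x h; simp
  · intro h k; simp
  · intro x y z; simpa using L3 b hCL.skew hCL.jacobi x y z
  · intro h x y; simpa using L4 a b hrep h x y
  · intro w x y z
    have e := ceDiff3_apply (K := K) (fun u v => b u v) (fun u => a u)
      (fun p q r => θ p q r) w x y z
    have E := e.symm.trans (hcocy ![w, x, y, z])
    rw [← sub_eq_zero]
    conv_rhs => rw [← E]
    abel
  · intro x h; simp
  · intro h k; simp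
  · intro x y z; simpa using L3 b' hCL.skew' hCL.jacobi' x y z
  · intro h x y; simpa using L4 a' b' hrep' h x y
  · intro w x y z
    have e := ceDiff3_apply (K := K) (fun u v => b' u v) (fun u => a' u)
      (fun p q r => θ' p q r) w x y z
    have E := e.symm.trans (hcocy' ![w, x, y, z])
    rw [← sub_eq_zero]
    conv_rhs => rw [← E]
    abel
  · intro x h; simp
  · intro h k; simp
  · intro x y z
    have c := hCL.compat x y z
    have hz := sub_eq_zero.mpr c
    simp only [LinearMap.zero_apply, add_zero, zero_add, map_zero]
    rw [← sub_eq_zero]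
    conv_rhs => rw [← hz]
    abel
  · intro h x y
    have c := hrepmix x y
    have hx := congrArg (fun f : A →ₗ[K] A => f h) c
    simp only [LinearMap.add_apply, LinearMap.sub_apply, LinearMap.comp_apply] at hx
    have hz := sub_eq_zero.mpr hx
    simp only [LinearMap.zero_apply, map_zero, add_zero, zero_add, LinearMap.map_zero]
    rw [← sub_eq_zero]
    conv_rhs => rw [← hz]
    abel
  · intro w x y z
    have e1 := ceDiff3_apply (K := K) (fun u v => b u v) (fun u => a u)
      (fun p q r => θ' p q r) w x y z
    have e2 := ceDiff3_apply (K := K) (fun u v => b' u v) (fun u => a' u)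
      (fun p q r => θ p q r) w x y z
    have E := (congrArg₂ (· + ·) e1.symm e2.symm).trans (hcocymix ![w, x, y, z])
    rw [← sub_eq_zero]
    conv_rhs => rw [← E]
    abel
end
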